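/- arXiv:1903.11890 — 2 statements merged into one kernel-verified Lean document; each statement's English description precedes it below -/
import Mathlib

section
/- If G is a block graph, then 𝒫(G) ≠ ∅ if and only if G is non-elementary (neither a complete graph nor a path graph). -/
/-- Set of vertices distinguishing `u` and `v`. -/
noncomputable def distinguishers {V : Type*} (G : SimpleGraph V) (u v : V) : Set V :=
  {w | G.dist u w ≠ G.dist v w}

/-- `Dim(G)`: the largest `k` such that every pair of distinct vertices is
distinguished by at least `k` vertices. -/
noncomputable def metricDim {V : Type*} (G : SimpleGraph V) : ℕ :=
  sSup {k | ∀ u v : V, u ≠ v → k ≤ (distinguishers G u v).ncard}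

/-- The boundary `∂N(v,m)`: vertices at distance `m` from `v` having a
neighbor outside `N(v,m)`. -/
def bdry {V : Type*} (G : SimpleGraph V) (v : V) (m : ℕ) : Set V :=
  {w | G.dist v w = m ∧ ∃ x, G.Adj w x ∧ m < G.dist v x}

/-- `v` and `v'` are distinct and have equal (nonempty) `m`-boundary. -/
def eqBdry {V : Type*} (G : SimpleGraph V) (v v' : V) (m : ℕ) : Prop :=
  v ≠ v' ∧ bdry G v m = bdry G v' m ∧ (bdry G v m).Nonempty

noncomputable def etaM {V : Type*} (G : SimpleGraph V) (v v' : V) (m : ℕ) : ℕ :=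
  {w | (G.dist v w ≤ m ∨ G.dist v' w ≤ m) ∧ G.dist v w ≠ G.dist v' w}.ncard

noncomputable def etaG {V : Type*} (G : SimpleGraph V) : ℕ :=
  sInf {n | ∃ (m : ℕ) (v v' : V), eqBdry G v v' m ∧ n = etaM G v v' m}

/-- the diameter of `G`. -/
noncomputable def gdiam {V : Type*} (G : SimpleGraph V) : ℕ :=
  sSup {n | ∃ u v : V, G.dist u v = n}

/-- Reachability in `G` avoiding the vertex set `S`. -/
def ReachOff {V : Type*} (G : SimpleGraph V) (S : Set V) (a b : V) : Prop :=
  ∃ p : G.Walk a b, ∀ x ∈ p.support, x ∉ S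

/-- `S` is a common separating subset of the `m`-spheres of `v` and `v'`. -/
def CommonSepSubset {V : Type*} (G : SimpleGraph V) (v v' : V) (m : ℕ) (S : Set V) : Prop :=
  S ⊆ {w | G.dist v w = m} ∩ {w | G.dist v' w = m} ∧
  (∃ a b : V, a ∉ S ∧ b ∉ S ∧ ¬ ReachOff G S a b) ∧
  (∃ w : V, w ∉ S ∧ ¬ ReachOff G S w v ∧ ¬ ReachOff G S w v')

/-- `(v,v') ∈ 𝒫ₘ(G)`. -/
def memPm {V : Type*} (G : SimpleGraph V) (v v' : V) (m : ℕ) : Prop :=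
  v ≠ v' ∧ ∃ S : Set V, CommonSepSubset G v v' m S

/-- `Sₘ(v,v')`: the union of all common separating subsets of the `m`-spheres. -/
def SmUnion {V : Type*} (G : SimpleGraph V) (v v' : V) (m : ℕ) : Set V :=
  {x | ∃ S : Set V, CommonSepSubset G v v' m S ∧ x ∈ S}

/-- The union of the components of `G \ Sₘ(v,v')` containing neither `v` nor `v'`. -/
def avoidComps {V : Type*} (G : SimpleGraph V) (v v' : V) (m : ℕ) : Set V :=
  {w | w ∉ SmUnion G v v' m ∧ ¬ ReachOff G (SmUnion G v v' m) w v ∧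
    ¬ ReachOff G (SmUnion G v v' m) w v'}

noncomputable def muM {V : Type*} (G : SimpleGraph V) (v v' : V) (m : ℕ) : ℕ :=
  {w | w ∉ avoidComps G v v' m ∧ G.dist v w ≠ G.dist v' w}.ncard

noncomputable def muG {V : Type*} (G : SimpleGraph V) : ℕ :=
  sInf {n | ∃ (m : ℕ) (v v' : V), memPm G v v' m ∧ n = muM G v v' m}

/-- degree as the cardinality of the neighbor set. -/
noncomputable def ndeg {V : Type*} (G : SimpleGraph V) (v : V) : ℕ := (G.neighborSet v).ncard

def IsMajor {V : Type*} (G : SimpleGraph V) (v : V) : Prop := 3 ≤ ndeg G v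

/-- `u` is a terminal vertex of the major vertex `w`. -/
def IsTerminalOf {V : Type*} (G : SimpleGraph V) (u w : V) : Prop :=
  ndeg G u = 1 ∧ IsMajor G w ∧
    ∀ w', IsMajor G w' → w' ≠ w → G.dist u w < G.dist u w'

/-- `G` is a V-graph. -/
def IsVGraph {V : Type*} (G : SimpleGraph V) : Prop :=
  ∃ w, IsMajor G w ∧ {u | IsTerminalOf G u w}.ncard = 2 ∧
    ∀ u, IsTerminalOf G u w → G.Adj u w

/-- `G` is a block graph: connected and every biconnected (2-connected)
set of vertices induces a clique. -/
def IsBlockGraph {V : Type*} (G : SimpleGraph V) : Prop :=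
  G.Connected ∧ ∀ B : Set V, 3 ≤ B.ncard → (G.induce B).Connected →
    (∀ x ∈ B, (G.induce (B \ {x})).Connected) → G.IsClique B

/-- `G` is tagged. -/
def Tagged {V : Type*} (G : SimpleGraph V) : Prop :=
  ∃ K : Set V, G.IsClique K ∧ (∀ K' : Set V, K ⊆ K' → G.IsClique K' → K' = K) ∧
    3 ≤ K.ncard ∧ ∃ u ∈ K, ∃ v ∈ K, u ≠ v ∧
      ndeg G u = K.ncard - 1 ∧ ndeg G v = K.ncard - 1

/-- `G` is neither a complete graph nor a path graph. -/
def NonElementary {V : Type*} (G : SimpleGraph V) : Prop :=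
  G ≠ ⊤ ∧ ∀ n : ℕ, IsEmpty (G ≃g SimpleGraph.pathGraph n)

section AuxProof
variable {V : Type*} {W : Type*} {G : SimpleGraph V} {H : SimpleGraph W}
open SimpleGraph


lemma reachOff_refl {S : Set V} {a : V} (ha : a ∉ S) : ReachOff G S a a :=
  ⟨Walk.nil, by simp [ha]⟩

lemma reachOff_symm {S : Set V} {a b : V} (h : ReachOff G S a b) : ReachOff G S b a := by
  obtain ⟨p, hp⟩ := h
  exact ⟨p.reverse, fun x hx => hp x (by simpa [Walk.support_reverse] using hx)⟩

lemma reachOff_trans {S : Set V} {a b c : V} (h1 : ReachOff G S a b) (h2 : ReachOff G S b c) :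
    ReachOff G S a c := by
  obtain ⟨p, hp⟩ := h1; obtain ⟨q, hq⟩ := h2
  refine ⟨p.append q, fun x hx => ?_⟩
  rw [Walk.support_append, List.mem_append] at hx
  rcases hx with hx | hx
  · exact hp x hx
  · exact hq x (List.mem_of_mem_tail hx)

lemma reachOff_adj {S : Set V} {a b : V} (h : G.Adj a b) (ha : a ∉ S) (hb : b ∉ S) :
    ReachOff G S a b :=
  ⟨h.toWalk, by
    intro x hx
    simp only [Adj.toWalk, Walk.support_cons, Walk.support_nil, List.mem_cons,
      List.mem_singleton, List.not_mem_nil, or_false] at hx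
    rcases hx with rfl | rfl
    · exact ha
    · exact hb⟩

lemma reachOff_not_mem_left {S : Set V} {a b : V} (h : ReachOff G S a b) : a ∉ S := by
  obtain ⟨p, hp⟩ := h; exact hp a p.start_mem_support

/-- connectivity of the induced graph on a cycle minus one vertex -/
lemma cycle_diff_connected {x : V} (c : G.Walk x x) (hc : c.IsCycle) (y : V) :
    (G.induce ({z | z ∈ c.support} \ {y})).Connected := by
  classical
  by_cases hy : y ∈ c.support
  · have hsupp : ∀ w, w ∈ c.support ↔ w ∈ (c.rotate y hy).support := by
      intro w
      have h1 := congrArg Subgraph.verts (c.toSubgraph_rotate hy)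
      simp only [Walk.verts_toSubgraph] at h1
      constructor
      · intro h; exact (Set.ext_iff.mp h1.symm w).mp h
      · intro h; exact (Set.ext_iff.mp h1 w).mp h
    have hc' : (c.rotate y hy).IsCycle := hc.rotate hy
    have hnil : ¬ (c.rotate y hy).Nil := by
      intro h
      have h3 := hc'.three_le_length
      rw [Walk.nil_iff_length_eq] at h
      omega
    obtain ⟨z, h, q, hq⟩ := Walk.not_nil_iff.mp hnil
    have hqnodup : (q.support).Nodup := by
      have := (Walk.isCycle_def _).mp hc'
      have h2 := this.2.2
      rw [hq, Walk.support_cons] at h2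
      simpa using h2
    have hrnil : ¬ q.reverse.Nil := by
      intro hn
      rw [Walk.nil_iff_length_eq, Walk.length_reverse] at hn
      exact h.ne (Walk.eq_of_length_eq_zero hn).symm
    obtain ⟨z2, h2, q2, hq2⟩ := Walk.not_nil_iff.mp hrnil
    have hrev : q.reverse.support = y :: q2.support := by rw [hq2, Walk.support_cons]
    have hymem : ∀ w, w ∈ q.support ↔ (w = y ∨ w ∈ q2.support) := by
      intro w
      rw [← List.mem_reverse, ← Walk.support_reverse, hrev]
      simp
    have hynotin : y ∉ q2.support := by
      have : q.reverse.support.Nodup := by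
        rw [Walk.support_reverse, List.nodup_reverse]; exact hqnodup
      rw [hrev] at this
      exact (List.nodup_cons.mp this).1
    have hset : {z | z ∈ c.support} \ {y} = {z | z ∈ q2.support} := by
      ext w
      simp only [Set.mem_diff, Set.mem_setOf_eq, Set.mem_singleton_iff]
      constructor
      · rintro ⟨hw, hwy⟩
        rw [hsupp, hq, Walk.support_cons] at hw
        rcases List.mem_cons.mp hw with rfl | hw
        · exact absurd rfl hwy
        · rcases (hymem w).mp hw with rfl | hw
          · exact absurd rfl hwy
          · exact hw
      · intro hw
        refine ⟨?_, fun h' => hynotin (h' ▸ hw)⟩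
        rw [hsupp, hq, Walk.support_cons]
        exact List.mem_cons.mpr (Or.inr ((hymem w).mpr (Or.inr hw)))
    rw [hset]
    exact q2.connected_induce_support
  · have hset : {z | z ∈ c.support} \ {y} = {z | z ∈ c.support} := by
      ext w; simp only [Set.mem_diff, Set.mem_setOf_eq, Set.mem_singleton_iff]
      exact ⟨fun h => h.1, fun h => ⟨h, fun h' => hy (h' ▸ h)⟩⟩
    rw [hset]
    exact c.connected_induce_support





lemma triple_ncard {s : Set V} [Finite V] {a b c : V} (ha : a ∈ s) (hb : b ∈ s) (hc : c ∈ s)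
    (hab : a ≠ b) (hac : a ≠ c) (hbc : b ≠ c) : 3 ≤ s.ncard := by
  have hsub : ({a, b, c} : Set V) ⊆ s := by
    intro z hz; rcases hz with rfl | rfl | rfl
    · exact ha
    · exact hb
    · exact hc
  have h3 : ({a, b, c} : Set V).ncard = 3 := by
    rw [Set.ncard_insert_of_notMem (by simp [hab, hac]),
      Set.ncard_insert_of_notMem (by simp [hbc]), Set.ncard_singleton]
  calc 3 = ({a, b, c} : Set V).ncard := h3.symm
    _ ≤ s.ncard := Set.ncard_le_ncard hsub (Set.toFinite s)

/-- Key block graph lemma: a vertex separates its non-adjacent neighbors. -/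
lemma block_sep [Finite V] (hG : IsBlockGraph G) {x u w : V} (hxu : G.Adj x u) (hxw : G.Adj x w)
    (huw : ¬ G.Adj u w) (hne : u ≠ w) : ¬ ReachOff G {x} u w := by
  classical
  rintro ⟨p₀, hp₀⟩
  have hx : x ∉ p₀.bypass.support := fun h => hp₀ x (p₀.support_bypass_subset h) rfl
  have hpp : p₀.bypass.IsPath := p₀.bypass_isPath
  set p := p₀.bypass with hpdef
  have hwx : G.Adj w x := hxw.symm
  have hPpath : (p.concat hwx).IsPath := by
    have h1 : (Walk.cons hxw p.reverse).IsPath := by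
      rw [Walk.cons_isPath_iff]
      exact ⟨hpp.reverse, by rw [Walk.support_reverse]; simpa using hx⟩
    have h2 := h1.reverse
    rw [Walk.reverse_cons, Walk.reverse_reverse] at h2
    exact h2
  have hedge : s(x, u) ∉ (p.concat hwx).edges := by
    rw [Walk.edges_concat]
    intro hmem
    rw [List.concat_eq_append, List.mem_append] at hmem
    rcases hmem with hmem | hmem
    · exact hx (Walk.fst_mem_support_of_mem_edges p hmem)
    · simp only [List.mem_singleton, Sym2.eq, Sym2.rel_iff', Prod.mk.injEq,
        Prod.swap_prod_mk] at hmem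
      rcases hmem with ⟨rfl, rfl⟩ | ⟨h1, h2⟩
      · exact hxw.ne rfl
      · exact hne h2
  have hcyc : (Walk.cons hxu (p.concat hwx)).IsCycle :=
    (Walk.cons_isCycle_iff _ hxu).mpr ⟨hPpath, hedge⟩
  set c := Walk.cons hxu (p.concat hwx) with hcdef
  set B := {z | z ∈ c.support} with hBdef
  have hxB : x ∈ B := c.start_mem_support
  have huB : u ∈ B := by
    rw [hBdef, hcdef]; simp only [Set.mem_setOf_eq, Walk.support_cons]
    exact List.mem_cons.mpr (Or.inr (Walk.start_mem_support _))
  have hwB : w ∈ B := by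
    rw [hBdef, hcdef]; simp only [Set.mem_setOf_eq, Walk.support_cons]
    refine List.mem_cons.mpr (Or.inr ?_)
    rw [Walk.support_concat, List.mem_append]
    exact Or.inl (Walk.end_mem_support p)
  have hB3 : 3 ≤ B.ncard := triple_ncard hxB huB hwB hxu.ne hxw.ne hne
  have hclique : G.IsClique B :=
    hG.2 B hB3 c.connected_induce_support (fun y _ => cycle_diff_connected c hcyc y)
  exact huw (hclique huB hwB hne)

/-- triangle-free block graphs have no cycles -/
lemma no_cycle [Finite V] (hG : IsBlockGraph G)
    (htf : ∀ a b c : V, G.Adj a b → G.Adj a c → G.Adj b c → False)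
    {x : V} (c : G.Walk x x) (hc : c.IsCycle) : False := by
  classical
  have htail : c.support.tail.Nodup := ((Walk.isCycle_def _).mp hc).2.2
  have hlen : 3 ≤ c.support.tail.length := by
    have := hc.three_le_length
    have hs := Walk.length_support c
    simp only [List.length_tail, hs]
    omega
  have hsub : ↑c.support.tail.toFinset ⊆ {z | z ∈ c.support} := by
    intro z hz
    simp only [Finset.coe_sort_coe, Finset.mem_coe, List.mem_toFinset] at hz
    exact List.mem_of_mem_tail hz
  have hB3 : 3 ≤ ({z | z ∈ c.support} : Set V).ncard := by
    calc 3 ≤ c.support.tail.length := hlen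
      _ = c.support.tail.toFinset.card := (List.toFinset_card_of_nodup htail).symm
      _ = (↑c.support.tail.toFinset : Set V).ncard := (Set.ncard_coe_finset _).symm
      _ ≤ _ := Set.ncard_le_ncard hsub (Set.toFinite _)
  have hclique : G.IsClique {z | z ∈ c.support} :=
    hG.2 _ hB3 c.connected_induce_support (fun y _ => cycle_diff_connected c hc y)
  obtain ⟨t, hts, htc⟩ := Set.exists_subset_card_eq hB3
  obtain ⟨a, b, d, hab, had, hbd, rfl⟩ := Set.ncard_eq_three.mp htc
  exact htf a b d (hclique (hts (by simp)) (hts (by simp)) hab)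
    (hclique (hts (by simp)) (hts (by simp)) had)
    (hclique (hts (by simp)) (hts (by simp)) hbd)


/-- The key configuration: a cut vertex `x` with two distinct neighbors `v, v'` and a third
neighbor `w` separated from both by `x`. -/
def Cfg {V : Type*} (G : SimpleGraph V) : Prop :=
  ∃ x v v' w : V, G.Adj x v ∧ G.Adj x v' ∧ G.Adj x w ∧ v ≠ v' ∧
    ¬(w = v ∨ G.Adj w v) ∧ ¬(w = v' ∨ G.Adj w v')

lemma cfg_memPm [Finite V] (hG : IsBlockGraph G) (h : Cfg G) :
    ∃ (m : ℕ) (v v' : V), memPm G v v' m := by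
  obtain ⟨x, v, v', w, hxv, hxv', hxw, hvv', hwv, hwv'⟩ := h
  push_neg at hwv hwv'
  have hwx : w ∉ ({x} : Set V) := by
    simp only [Set.mem_singleton_iff]; exact fun h => hxw.ne h.symm
  have hvx : v ∉ ({x} : Set V) := by
    simp only [Set.mem_singleton_iff]; exact fun h => hxv.ne h.symm
  have hRv : ¬ ReachOff G {x} w v := block_sep hG hxw hxv hwv.2 hwv.1
  have hRv' : ¬ ReachOff G {x} w v' := block_sep hG hxw hxv' hwv'.2 hwv'.1
  refine ⟨1, v, v', hvv', {x}, ?_, ⟨w, v, hwx, hvx, hRv⟩, ⟨w, hwx, hRv, hRv'⟩⟩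
  rintro s rfl
  refine ⟨?_, ?_⟩ <;> simp only [Set.mem_setOf_eq] <;> rw [SimpleGraph.dist_eq_one_iff_adj]
  · exact hxv.symm
  · exact hxv'.symm

lemma not_cfg_nbhd [Finite V] (hG : IsBlockGraph G) (hnc : ¬ Cfg G) (x : V) :
    G.IsClique (G.neighborSet x) ∨
      ∃ u w, u ≠ w ∧ ¬ G.Adj u w ∧ G.neighborSet x = {u, w} := by
  by_cases hcl : G.IsClique (G.neighborSet x)
  · exact Or.inl hcl
  right
  rw [SimpleGraph.isClique_iff, Set.Pairwise] at hcl
  push_neg at hcl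
  obtain ⟨u, hu, w, hw, hune, huw⟩ := hcl
  rw [SimpleGraph.mem_neighborSet] at hu hw
  have hux : u ∉ ({x} : Set V) := by simp only [Set.mem_singleton_iff]; exact fun h => hu.ne h.symm
  have hwxx : w ∉ ({x} : Set V) := by simp only [Set.mem_singleton_iff]; exact fun h => hw.ne h.symm
  have hsep : ¬ ReachOff G {x} u w := block_sep hG hu hw huw hune
  have key : ∀ z, G.Adj x z → z = u ∨ z = w := by
    intro z hz
    have hzx : z ∉ ({x} : Set V) := by simp only [Set.mem_singleton_iff]; exact fun h => hz.ne h.symm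
    have h1 : (z = u ∨ G.Adj z u) ∨ (z = w ∨ G.Adj z w) := by
      by_contra hcon
      push_neg at hcon
      exact hnc ⟨x, u, w, z, hu, hw, hz, hune,
        by push_neg; exact hcon.1, by push_neg; exact hcon.2⟩
    rcases h1 with (rfl | hzu) | (rfl | hzw)
    · exact Or.inl rfl
    · -- z adjacent to u; derive contradiction unless z = w
      by_cases hzw : z = w
      · exact Or.inr hzw
      exfalso
      have h2 : (w = u ∨ G.Adj w u) ∨ (w = z ∨ G.Adj w z) := by
        by_contra hcon
        push_neg at hcon
        exact hnc ⟨x, u, z, w, hu, hz, hw, fun h => hzu.ne' h,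
          by push_neg; exact hcon.1, by push_neg; exact hcon.2⟩
      have hadjwz : G.Adj w z := by
        rcases h2 with (h | h) | (h | h)
        · exact absurd h hune.symm
        · exact absurd h.symm huw
        · exact absurd h.symm hzw
        · exact h
      exact hsep (reachOff_trans (reachOff_adj hzu.symm hux hzx)
        (reachOff_adj hadjwz.symm hzx hwxx))
    · exact Or.inr rfl
    · -- z adjacent to w
      by_cases hzu : z = u
      · exact Or.inl hzu
      exfalso
      have h2 : (u = w ∨ G.Adj u w) ∨ (u = z ∨ G.Adj u z) := by
        by_contra hcon
        push_neg at hcon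
        exact hnc ⟨x, w, z, u, hw, hz, hu, fun h => hzw.ne' h,
          by push_neg; exact hcon.1, by push_neg; exact hcon.2⟩
      have hadjuz : G.Adj u z := by
        rcases h2 with (h | h) | (h | h)
        · exact absurd h hune
        · exact absurd h huw
        · exact absurd h.symm hzu
        · exact h
      exact hsep (reachOff_trans (reachOff_adj hadjuz hux hzx)
        (reachOff_adj hzw hzx hwxx))
  refine ⟨u, w, hune, huw, ?_⟩
  ext z
  simp only [SimpleGraph.mem_neighborSet, Set.mem_insert_iff, Set.mem_singleton_iff]
  constructor
  · exact key z
  · rintro (rfl | rfl)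
    · exact hu
    · exact hw



lemma exists_exit_edge {K : Set V} : ∀ {a b : V} (p : G.Walk a b), a ∈ K → b ∉ K →
    ∃ y z, y ∈ K ∧ z ∉ K ∧ G.Adj y z := by
  intro a b p
  induction p with
  | nil => intro ha hb; exact absurd ha hb
  | cons h q ih =>
    intro ha hb
    rename_i u c w
    by_cases hc : c ∈ K
    · exact ih hc hb
    · exact ⟨u, c, ha, hc, h⟩

/-- property: each neighborhood is a clique, or consists of two non-adjacent vertices -/
def NbhdProp {V : Type*} (G : SimpleGraph V) : Prop :=
  ∀ x : V, G.IsClique (G.neighborSet x) ∨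
    ∃ u w, u ≠ w ∧ ¬ G.Adj u w ∧ G.neighborSet x = {u, w}

lemma triangle_top [Fintype V] (hconn : G.Connected) (hyp : NbhdProp G)
    {a b c : V} (hab : G.Adj a b) (hac : G.Adj a c) (hbc : G.Adj b c) : G = ⊤ := by
  classical
  have key : ∀ n (K : Set V), G.IsClique K → 3 ≤ K.ncard →
      Fintype.card V - K.ncard ≤ n → G.IsClique Set.univ := by
    intro n
    induction n with
    | zero =>
      intro K hK h3 hn
      have huniv : K = Set.univ := by
        by_contra hne
        have hsub : K ⊂ Set.univ := Set.ssubset_univ_iff.mpr hne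
        have := Set.ncard_lt_ncard hsub (Set.toFinite _)
        rw [Set.ncard_univ, Nat.card_eq_fintype_card] at this
        omega
      rwa [huniv] at hK
    | succ n ih =>
      intro K hK h3 hn
      by_cases huniv : K = Set.univ
      · rwa [huniv] at hK
      obtain ⟨q, hq⟩ : ∃ q, q ∉ K := by
        by_contra hcon; push_neg at hcon
        exact huniv (Set.eq_univ_iff_forall.mpr hcon)
      have hKne : K.Nonempty := by
        rcases Set.eq_empty_or_nonempty K with rfl | h
        · simp [Set.ncard_empty] at h3
        · exact h
      obtain ⟨k₀, hk₀⟩ := hKne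
      obtain ⟨p⟩ := hconn k₀ q
      obtain ⟨y, z, hy, hz, hyz⟩ := exists_exit_edge p hk₀ hq
      have h2 : 2 ≤ (K \ {y}).ncard := by
        rw [Set.ncard_diff_singleton_of_mem hy]
        omega
      obtain ⟨u₁, hu₁, u₂, hu₂, hne12⟩ := (Set.one_lt_ncard (s := K \ {y}) (Set.toFinite _)).mp (by omega)
      have hyu₁ : G.Adj y u₁ := hK hy hu₁.1 (fun h => hu₁.2 h.symm)
      have hyu₂ : G.Adj y u₂ := hK hy hu₂.1 (fun h => hu₂.2 h.symm)
      have hadj12 : G.Adj u₁ u₂ := hK hu₁.1 hu₂.1 hne12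
      -- y's neighborhood must be a clique
      have hcl : G.IsClique (G.neighborSet y) := by
        rcases hyp y with h | ⟨u, w, hune, huw, hN⟩
        · exact h
        exfalso
        have h1 : u₁ ∈ ({u, w} : Set V) := hN ▸ hyu₁
        have h2 : u₂ ∈ ({u, w} : Set V) := hN ▸ hyu₂
        rcases h1 with rfl | rfl <;> rcases h2 with rfl | rfl
        · exact hne12 rfl
        · exact huw hadj12
        · exact huw hadj12.symm
        · exact hne12 rfl
      have hznK : z ∉ K := hz
      have hKz : G.IsClique (insert z K) := by
        refine hK.insert fun k hk hkz => ?_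
        by_cases hky : k = y
        · exact hky ▸ hyz.symm
        · exact (hcl (hyz : z ∈ G.neighborSet y)
            (hK hy hk (fun h => hky h.symm) : k ∈ G.neighborSet y) hkz)
      have hcard : (insert z K).ncard = K.ncard + 1 :=
        Set.ncard_insert_of_notMem hznK (Set.toFinite _)
      exact ih (insert z K) hKz (by omega) (by omega)
  have htri : G.IsClique {a, b, c} := by
    intro p hp q hq hpq
    simp only [Set.mem_insert_iff, Set.mem_singleton_iff] at hp hq
    rcases hp with rfl | rfl | rfl <;> rcases hq with rfl | rfl | rfl <;>
      first | exact absurd rfl hpq | assumption | exact hab.symm | exact hac.symm | exact hbc.symm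
  have h3 : ({a, b, c} : Set V).ncard = 3 := by
    rw [Set.ncard_insert_of_notMem (by simp [hab.ne, hac.ne]),
      Set.ncard_insert_of_notMem (by simp [hbc.ne]), Set.ncard_singleton]
  have huc : G.IsClique Set.univ :=
    key (Fintype.card V) {a, b, c} htri (by omega) (by omega)
  ext x y
  simp only [top_adj]
  exact ⟨fun h => h.ne, fun h => huc trivial trivial h⟩





lemma getVert_inj {a b : V} {p : G.Walk a b} (hp : p.IsPath) :
    ∀ {i j : ℕ}, i ≤ p.length → j ≤ p.length → p.getVert i = p.getVert j → i = j := by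
  induction p with
  | nil => intro i j hi hj _; simp only [Walk.length_nil, Nat.le_zero] at hi hj; omega
  | cons h q ih =>
    rename_i u c w
    rw [Walk.cons_isPath_iff] at hp
    intro i j hi hj hij
    rw [Walk.length_cons] at hi hj
    match i, j with
    | 0, 0 => rfl
    | 0, j + 1 =>
      exfalso
      rw [Walk.getVert_zero, Walk.getVert_cons_succ] at hij
      exact hp.2 (Walk.mem_support_iff_exists_getVert.mpr ⟨j, hij.symm, by omega⟩)
    | i + 1, 0 =>
      exfalso
      rw [Walk.getVert_zero, Walk.getVert_cons_succ] at hij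
      exact hp.2 (Walk.mem_support_iff_exists_getVert.mpr ⟨i, hij, by omega⟩)
    | i + 1, j + 1 =>
      rw [Walk.getVert_cons_succ, Walk.getVert_cons_succ] at hij
      have := ih hp.1 (by omega) (by omega) hij
      omega

lemma edge_start_eq {b z : V} : ∀ {a : V} (q : G.Walk a b), q.IsPath → s(a, z) ∈ q.edges →
    z = q.getVert 1 := by
  intro a q
  induction q with
  | nil => intro _ h; simp at h
  | cons h q ih =>
    rename_i u c w
    intro hq he
    rw [Walk.edges_cons, List.mem_cons] at he
    rcases he with he | he
    · simp only [Sym2.eq, Sym2.rel_iff', Prod.mk.injEq, Prod.swap_prod_mk] at he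
      rw [Walk.getVert_cons_succ, Walk.getVert_zero]
      rcases he with ⟨_, rfl⟩ | ⟨rfl, rfl⟩
      · rfl
      · exact absurd rfl h.ne
    · exfalso
      rw [Walk.cons_isPath_iff] at hq
      exact hq.2 (Walk.fst_mem_support_of_mem_edges q he)

lemma path_iso [Fintype V] (hG : IsBlockGraph G)
    (htf : ∀ a b c : V, G.Adj a b → G.Adj a c → G.Adj b c → False)
    (hdeg : ∀ x : V, (G.neighborSet x).ncard ≤ 2) :
    ∃ n, Nonempty (G ≃g SimpleGraph.pathGraph n) := by
  classical
  have hne : Nonempty V := hG.1.nonempty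
  obtain ⟨v₀⟩ := hne
  set T : Set ℕ := {n | ∃ (a b : V) (p : G.Walk a b), p.IsPath ∧ p.length = n} with hT
  have hT0 : 0 ∈ T := ⟨v₀, v₀, Walk.nil, Walk.IsPath.nil, rfl⟩
  have hbdd : BddAbove T := by
    refine ⟨Fintype.card V, ?_⟩
    rintro n ⟨a, b, p, hp, rfl⟩
    exact le_of_lt hp.length_lt
  set n₀ := sSup T with hn₀
  obtain ⟨e, e', p, hp, hplen⟩ := Nat.sSup_mem ⟨0, hT0⟩ hbdd
  have hmax : ∀ {a b : V} (q : G.Walk a b), q.IsPath → q.length ≤ n₀ :=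
    fun q hq => le_csSup hbdd ⟨_, _, q, hq, rfl⟩
  -- the maximal path visits every vertex
  have hsupp : ∀ z : V, z ∈ p.support := by
    by_contra hcon
    push_neg at hcon
    obtain ⟨z, hz⟩ := hcon
    obtain ⟨q⟩ := hG.1 z e
    obtain ⟨y, s, hy, hs, hys⟩ :=
      exists_exit_edge (K := {v | v ∉ p.support}) q hz (by simpa using p.start_mem_support)
    simp only [Set.mem_setOf_eq, not_not] at hy hs
    by_cases hse : s = e
    · subst hse
      have hq : (Walk.cons hys p).IsPath := (Walk.cons_isPath_iff _ _).mpr ⟨hp, hy⟩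
      have := hmax _ hq
      rw [Walk.length_cons, hplen] at this
      omega
    by_cases hse' : s = e'
    · subst hse'
      have hq : (Walk.cons hys p.reverse).IsPath :=
        (Walk.cons_isPath_iff _ _).mpr ⟨hp.reverse, by rwa [Walk.support_reverse, List.mem_reverse]⟩
      have := hmax _ hq
      rw [Walk.length_cons, Walk.length_reverse, hplen] at this
      omega
    -- s is interior: it has two distinct neighbors on the path plus y
    have ht1 : (p.takeUntil s hs).IsPath := hp.takeUntil hs
    have ht2 : (p.dropUntil s hs).IsPath := hp.dropUntil hs
    have ht1n : ¬ (p.takeUntil s hs).Nil := by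
      intro hn
      rw [Walk.nil_iff_length_eq] at hn
      exact hse (Walk.eq_of_length_eq_zero hn).symm
    have ht2n : ¬ (p.dropUntil s hs).Nil := by
      intro hn
      rw [Walk.nil_iff_length_eq] at hn
      exact hse' (Walk.eq_of_length_eq_zero hn)
    obtain ⟨c1, hc1, q1, hq1⟩ := Walk.not_nil_iff.mp ht1n
    obtain ⟨a1, q1', ha1, hq1'⟩ := Walk.exists_cons_eq_concat hc1 q1
    have ht1eq : p.takeUntil s hs = q1'.concat ha1 := by rw [hq1, hq1']
    obtain ⟨a2, ha2, q2, hq2⟩ := Walk.not_nil_iff.mp ht2n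
    have he1 : s(a1, s) ∈ (p.takeUntil s hs).edges := by
      rw [ht1eq, Walk.edges_concat, List.concat_eq_append, List.mem_append]
      right; simp
    have he2 : s(s, a2) ∈ (p.dropUntil s hs).edges := by
      rw [hq2, Walk.edges_cons]; simp
    have ha1s : a1 ∈ p.support := by
      apply p.support_takeUntil_subset hs
      rw [ht1eq, Walk.support_concat, List.mem_append]
      exact Or.inl q1'.end_mem_support
    have ha2s : a2 ∈ p.support := by
      apply p.support_dropUntil_subset hs
      rw [hq2, Walk.support_cons]
      exact List.mem_cons.mpr (Or.inr q2.start_mem_support)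
    have ha12 : a1 ≠ a2 := by
      rintro rfl
      have hnodup : ((p.takeUntil s hs).edges ++ (p.dropUntil s hs).edges).Nodup := by
        rw [← Walk.edges_append, Walk.take_spec]
        exact hp.isTrail.edges_nodup
      have hdisj := List.disjoint_of_nodup_append hnodup
      exact hdisj he1 (by rwa [Sym2.eq_swap] at he2)
    exact absurd (triple_ncard (s := G.neighborSet s)
      (ha1.symm : G.Adj s a1) ha2 (hys.symm : G.Adj s y)
      ha12 (fun h => hy (h ▸ ha1s)) (fun h => hy (h ▸ ha2s)))
      (by have := hdeg s; omega)
  have claim : ∀ i j : ℕ, i ≤ n₀ → j ≤ n₀ → i < j →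
      G.Adj (p.getVert i) (p.getVert j) → j = i + 1 := by
    intro i j hi hj hij hadj
    by_contra hne2
    have hj2 : i + 2 ≤ j := by omega
    rcases Nat.eq_zero_or_pos i with rfl | hipos
    · -- a cycle through the start vertex
      have hmem : p.getVert j ∈ p.support :=
        Walk.mem_support_iff_exists_getVert.mpr ⟨j, rfl, by omega⟩
      have hadj' : G.Adj (p.getVert j) e := by
        rw [Walk.getVert_zero] at hadj; exact hadj.symm
      have hedge : s(p.getVert j, e) ∉ (p.takeUntil _ hmem).edges := by
        intro hmm
        have hpe : s(e, p.getVert j) ∈ p.edges := by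
          have := p.edges_takeUntil_subset hmem hmm
          rwa [Sym2.eq_swap] at this
        have heq := edge_start_eq p hp hpe
        have hj1 := getVert_inj hp (i := j) (j := 1) (by omega) (by omega) (by rw [← heq])
        omega
      exact no_cycle hG htf _ ((Walk.cons_isCycle_iff _ hadj').mpr ⟨hp.takeUntil hmem, hedge⟩)
    · -- an interior vertex would have three distinct neighbors
      have h1 : G.Adj (p.getVert i) (p.getVert (i - 1)) := by
        have h := p.adj_getVert_succ (i := i - 1) (by omega)
        have heq : i - 1 + 1 = i := by omega
        rw [heq] at h
        exact h.symm
      have h2 : G.Adj (p.getVert i) (p.getVert (i + 1)) :=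
        p.adj_getVert_succ (by omega)
      have hd1 : p.getVert (i-1) ≠ p.getVert (i+1) := fun h => by
        have := getVert_inj hp (i := i-1) (j := i+1) (by omega) (by omega) h; omega
      have hd2 : p.getVert (i-1) ≠ p.getVert j := fun h => by
        have := getVert_inj hp (i := i-1) (j := j) (by omega) (by omega) h; omega
      have hd3 : p.getVert (i+1) ≠ p.getVert j := fun h => by
        have := getVert_inj hp (i := i+1) (j := j) (by omega) (by omega) h; omega
      exact absurd (triple_ncard (s := G.neighborSet (p.getVert i)) h1 h2 hadj hd1 hd2 hd3)
        (by have := hdeg (p.getVert i); omega)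
  refine ⟨n₀ + 1, ⟨?_⟩⟩
  have hbij : Function.Bijective (fun i : Fin (n₀+1) => p.getVert i.val) := by
    constructor
    · intro i j hij
      exact Fin.ext (getVert_inj hp (by omega) (by omega) hij)
    · intro z
      obtain ⟨n, hg, hle⟩ := Walk.mem_support_iff_exists_getVert.mp (hsupp z)
      exact ⟨⟨n, by omega⟩, hg⟩
  refine RelIso.symm { toEquiv := Equiv.ofBijective _ hbij, map_rel_iff' := ?_ }
  intro i j
  show G.Adj (p.getVert i.val) (p.getVert j.val) ↔ (SimpleGraph.pathGraph (n₀+1)).Adj i j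
  constructor
  · intro h
    rw [SimpleGraph.pathGraph_adj]
    rcases lt_trichotomy i.val j.val with hlt | heq | hgt
    · exact Or.inl (claim i.val j.val (by omega) (by omega) hlt h).symm
    · exfalso
      have : i = j := Fin.ext heq
      subst this
      exact h.ne rfl
    · exact Or.inr (claim j.val i.val (by omega) (by omega) hgt h.symm).symm
  · intro h
    rcases SimpleGraph.pathGraph_adj.mp h with h1 | h1
    · have hh := p.adj_getVert_succ (i := i.val) (by omega)
      rwa [h1] at hh
    · have hh := p.adj_getVert_succ (i := j.val) (by omega)
      rw [h1] at hh
      exact hh.symm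



lemma iso_dist_le (f : G ≃g H) (u v : V) : H.dist (f u) (f v) ≤ G.dist u v := by
  by_cases hr : G.Reachable u v
  · obtain ⟨p, hp⟩ := hr.exists_walk_length_eq_dist
    calc H.dist (f u) (f v) ≤ (p.map f.toHom).length := SimpleGraph.dist_le _
      _ = G.dist u v := by rw [Walk.length_map, hp]
  · rw [SimpleGraph.dist_eq_zero_of_not_reachable hr]
    rw [SimpleGraph.dist_eq_zero_of_not_reachable]
    intro hc
    obtain ⟨q⟩ := hc
    exact hr ⟨(q.map f.symm.toHom).copy (f.symm_apply_apply u) (f.symm_apply_apply v)⟩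

lemma iso_dist (f : G ≃g H) (u v : V) : H.dist (f u) (f v) = G.dist u v := by
  refine le_antisymm (iso_dist_le f u v) ?_
  have := iso_dist_le f.symm (f u) (f v)
  rwa [f.symm_apply_apply, f.symm_apply_apply] at this

lemma iso_reachOff (f : G ≃g H) {S : Set V} {a b : V} (h : ReachOff G S a b) :
    ReachOff H (f '' S) (f a) (f b) := by
  obtain ⟨p, hp⟩ := h
  refine ⟨p.map f.toHom, fun x hx => ?_⟩
  rw [Walk.support_map, List.mem_map] at hx
  obtain ⟨y, hy, rfl⟩ := hx
  rintro ⟨s, hs, hfs⟩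
  have : s = y := f.injective hfs
  exact hp y hy (this ▸ hs)

lemma iso_reachOff_rev (f : G ≃g H) {S : Set V} {a b : V}
    (h : ReachOff H (f '' S) (f a) (f b)) : ReachOff G S a b := by
  have h2 := iso_reachOff f.symm h
  rw [f.symm_apply_apply, f.symm_apply_apply] at h2
  have hSS : (⇑f.symm '' (⇑f '' S)) = S := by
    ext z
    constructor
    · rintro ⟨y, ⟨x, hx, rfl⟩, rfl⟩
      rwa [f.symm_apply_apply]
    · intro hz
      exact ⟨f z, ⟨z, hz, rfl⟩, f.symm_apply_apply z⟩
  rwa [hSS] at h2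

lemma iso_memPm (f : G ≃g H) {v v' : V} {m : ℕ} (h : memPm G v v' m) :
    memPm H (f v) (f v') m := by
  obtain ⟨hne, S, hsub, ⟨a, b, ha, hb, hab⟩, ⟨w, hw, hwv, hwv'⟩⟩ := h
  have himg : ∀ x : V, f x ∉ f '' S ↔ x ∉ S := by
    intro x
    constructor
    · intro hc hx; exact hc ⟨x, hx, rfl⟩
    · rintro hx ⟨s, hs, hfs⟩; exact hx (f.injective hfs ▸ hs)
  refine ⟨fun hc => hne (f.injective hc), f '' S, ?_, ⟨f a, f b, (himg a).mpr ha, (himg b).mpr hb,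
    fun hc => hab (iso_reachOff_rev f hc)⟩,
    ⟨f w, (himg w).mpr hw, fun hc => hwv (iso_reachOff_rev f hc),
      fun hc => hwv' (iso_reachOff_rev f hc)⟩⟩
  rintro x ⟨s, hs, rfl⟩
  obtain ⟨h1, h2⟩ := hsub hs
  exact ⟨by rw [Set.mem_setOf_eq, iso_dist]; exact h1, by rw [Set.mem_setOf_eq, iso_dist]; exact h2⟩

/-- walk length lower bound in path graphs -/
lemma pg_walk_bound {n : ℕ} : ∀ {i j : Fin n} (p : (SimpleGraph.pathGraph n).Walk i j),
    i.val ≤ j.val + p.length ∧ j.val ≤ i.val + p.length := by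
  intro i j p
  induction p with
  | nil => simp
  | cons h q ih =>
    rw [SimpleGraph.pathGraph_adj] at h
    rw [Walk.length_cons]
    omega

lemma pg_walk_exists {n : ℕ} : ∀ (d : ℕ) (i j : Fin n), j.val = i.val + d →
    ∃ p : (SimpleGraph.pathGraph n).Walk i j, p.length = d ∧
      ∀ z ∈ p.support, i.val ≤ z.val ∧ z.val ≤ j.val := by
  intro d
  induction d with
  | zero =>
    intro i j h
    have : i = j := Fin.ext (by omega)
    subst this
    exact ⟨Walk.nil, rfl, by simp⟩
  | succ d ih =>
    intro i j h
    have hi1 : i.val + 1 < n := by have := j.isLt; omega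
    set i' : Fin n := ⟨i.val + 1, hi1⟩ with hi'
    have hadj : (SimpleGraph.pathGraph n).Adj i i' :=
      SimpleGraph.pathGraph_adj.mpr (Or.inl rfl)
    have hval : i'.val = i.val + 1 := rfl
    obtain ⟨q, hq, hqs⟩ := ih i' j (by omega)
    refine ⟨Walk.cons hadj q, by rw [Walk.length_cons, hq], ?_⟩
    intro z hz
    rw [Walk.support_cons, List.mem_cons] at hz
    rcases hz with rfl | hz
    · omega
    · have := hqs z hz
      omega

lemma pg_dist_le {n : ℕ} (i j : Fin n) (hle : i.val ≤ j.val) :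
    (SimpleGraph.pathGraph n).dist i j = j.val - i.val := by
  obtain ⟨p, hp, _⟩ := pg_walk_exists (j.val - i.val) i j (by omega)
  refine le_antisymm (hp ▸ SimpleGraph.dist_le p) ?_
  have hr : (SimpleGraph.pathGraph n).Reachable i j := ⟨p⟩
  obtain ⟨q, hq⟩ := hr.exists_walk_length_eq_dist
  have := pg_walk_bound q
  omega

lemma pg_dist_iff {n : ℕ} (i j : Fin n) (m : ℕ) :
    (SimpleGraph.pathGraph n).dist i j = m ↔ (j.val = i.val + m ∨ i.val = j.val + m) := by
  rcases le_total i.val j.val with hle | hle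
  · rw [pg_dist_le i j hle]; omega
  · rw [SimpleGraph.dist_comm, pg_dist_le j i hle]; omega

lemma pg_reach_interval {n : ℕ} {S : Set (Fin n)} {x y : Fin n}
    (h : ∀ z : Fin n, min x.val y.val ≤ z.val → z.val ≤ max x.val y.val → z ∉ S) :
    ReachOff (SimpleGraph.pathGraph n) S x y := by
  rcases le_total x.val y.val with hle | hle
  · obtain ⟨p, _, hs⟩ := pg_walk_exists (y.val - x.val) x y (by omega)
    refine ⟨p, fun z hz => ?_⟩
    have := hs z hz
    exact h z (by omega) (by omega)
  · obtain ⟨p, _, hs⟩ := pg_walk_exists (x.val - y.val) y x (by omega)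
    refine ⟨p.reverse, fun z hz => ?_⟩
    rw [Walk.support_reverse, List.mem_reverse] at hz
    have := hs z hz
    exact h z (by omega) (by omega)

lemma pg_no_memPm {n : ℕ} (m : ℕ) (v v' : Fin n) : ¬ memPm (SimpleGraph.pathGraph n) v v' m := by
  rintro ⟨hne, S, hsub, ⟨a, b, ha, hb, hab⟩, ⟨w, hw, hwv, hwv'⟩⟩
  have hnev : v.val ≠ v'.val := fun h => hne (Fin.ext h)
  rcases Set.eq_empty_or_nonempty S with rfl | ⟨s₀, hs₀⟩
  · obtain ⟨q⟩ := SimpleGraph.pathGraph_preconnected n a b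
    exact hab ⟨q, by simp⟩
  have hchar : ∀ s ∈ S, (s.val = v.val + m ∧ v'.val = s.val + m) ∨
      (v.val = s.val + m ∧ s.val = v'.val + m) := by
    intro s hs
    obtain ⟨h1, h2⟩ := hsub hs
    rw [Set.mem_setOf_eq, SimpleGraph.dist_comm, pg_dist_iff] at h1 h2
    omega
  have hm : 1 ≤ m := by rcases hchar s₀ hs₀ with h | h <;> omega
  have huniq : ∀ s ∈ S, s = s₀ := by
    intro s hs
    have h1 := hchar s hs
    have h2 := hchar s₀ hs₀
    exact Fin.ext (by omega)
  -- v and v' lie strictly on opposite sides of s₀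
  have hvs : v.val < s₀.val ∧ s₀.val < v'.val ∨ v'.val < s₀.val ∧ s₀.val < v.val := by
    rcases hchar s₀ hs₀ with h | h <;> omega
  have hws : w.val ≠ s₀.val := fun h => hw (Fin.ext h ▸ hs₀)
  -- connect w to the endpoint on its own side
  have hreach : ∀ t : Fin n, (t.val < s₀.val ∧ w.val < s₀.val) ∨
      (s₀.val < t.val ∧ s₀.val < w.val) → ReachOff (SimpleGraph.pathGraph n) S w t := by
    intro t ht
    apply pg_reach_interval
    intro z hz1 hz2 hzS
    have := huniq z hzS
    subst this
    omega
  rcases hvs with ⟨h1, h2⟩ | ⟨h1, h2⟩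
  · rcases lt_or_gt_of_ne hws with hlt | hgt
    · exact hwv (hreach v (Or.inl ⟨h1, hlt⟩))
    · exact hwv' (hreach v' (Or.inr ⟨h2, hgt⟩))
  · rcases lt_or_gt_of_ne hws with hlt | hgt
    · exact hwv' (hreach v' (Or.inl ⟨h1, hlt⟩))
    · exact hwv (hreach v (Or.inr ⟨h2, hgt⟩))

lemma memPm_ne_top {v v' : V} {m : ℕ} (h : memPm G v v' m) : G ≠ ⊤ := by
  rintro rfl
  obtain ⟨hne, S, hsub, ⟨a, b, ha, hb, hab⟩, _⟩ := h
  by_cases hab' : a = b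
  · subst hab'
    exact hab ⟨Walk.nil, by simpa using ha⟩
  · exact hab ⟨((by simpa using hab' : (⊤ : SimpleGraph V).Adj a b)).toWalk, by
      intro x hx
      simp only [Adj.toWalk, Walk.support_cons, Walk.support_nil, List.mem_cons,
        List.mem_singleton, List.not_mem_nil, or_false] at hx
      rcases hx with rfl | rfl
      · exact ha
      · exact hb⟩

end AuxProof

theorem stmt16 {V : Type*} [Fintype V] (G : SimpleGraph V) (hG : IsBlockGraph G) :
    (∃ (m : ℕ) (v v' : V), memPm G v v' m) ↔ NonElementary G := by
  constructor
  · rintro ⟨m, v, v', hm⟩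
    refine ⟨memPm_ne_top hm, fun n => ⟨fun f => ?_⟩⟩
    exact pg_no_memPm m (f v) (f v') (iso_memPm f hm)
  · intro hne
    by_contra hcon
    have hncfg : ¬ Cfg G := fun h => hcon (cfg_memPm hG h)
    have hyp : NbhdProp G := fun x => not_cfg_nbhd hG hncfg x
    by_cases htri : ∃ a b c : V, G.Adj a b ∧ G.Adj a c ∧ G.Adj b c
    · obtain ⟨a, b, c, h1, h2, h3⟩ := htri
      exact hne.1 (triangle_top hG.1 hyp h1 h2 h3)
    · push_neg at htri
      have htf : ∀ a b c : V, G.Adj a b → G.Adj a c → G.Adj b c → False :=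
        fun a b c h1 h2 h3 => htri a b c h1 h2 h3
      have hdeg : ∀ x : V, (G.neighborSet x).ncard ≤ 2 := by
        intro x
        rcases hyp x with hcl | ⟨u, w, hune, huw, hN⟩
        · by_contra hc
          push_neg at hc
          obtain ⟨u₁, hu₁, u₂, hu₂, h12⟩ :=
            (Set.one_lt_ncard (s := G.neighborSet x) (Set.toFinite _)).mp (by omega)
          exact htf x u₁ u₂ hu₁ hu₂ (hcl hu₁ hu₂ h12)
        · rw [hN]
          exact (Set.ncard_insert_le _ _).trans (by rw [Set.ncard_singleton])
      obtain ⟨n, ⟨f⟩⟩ := path_iso hG htf hdeg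
      exact (hne.2 n).false f
end

section
/- If G is a non-elementary block graph that is not tagged, then for every pair of distinct vertices x, y ∈ G, either (x,y) ∈ 𝒫(G) (x and y have a common separating subset in their m-spheres for some m), or the number of vertices distinguishing x and y is at least |V(G)| − 1. -/
section BlockGraphHelpers

open SimpleGraph

variable {V : Type*} {G : SimpleGraph V} {S : Set V} {a b c : V}


lemma ReachOff.symm (h : ReachOff G S a b) : ReachOff G S b a := by
  obtain ⟨p, hp⟩ := h
  exact ⟨p.reverse, fun x hx => hp x (by simpa [SimpleGraph.Walk.support_reverse] using hx)⟩

lemma ReachOff.trans (h1 : ReachOff G S a b) (h2 : ReachOff G S b c) : ReachOff G S a c := by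
  obtain ⟨p, hp⟩ := h1
  obtain ⟨q, hq⟩ := h2
  refine ⟨p.append q, fun x hx => ?_⟩
  rcases (SimpleGraph.Walk.mem_support_append_iff _ _).mp hx with h | h
  · exact hp x h
  · exact hq x h

private lemma reach_induce {B : Set V} :
    ∀ {a b : V} (W : G.Walk a b) (hW : ∀ u ∈ W.support, u ∈ B) (ha : a ∈ B) (hb : b ∈ B),
      (G.induce B).Reachable ⟨a, ha⟩ ⟨b, hb⟩ := by
  intro a b W
  induction W with
  | nil => intro _ _ _; rfl
  | cons h p ih =>
    intro hW ha hb
    rename_i u v w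
    have hnext : v ∈ B := hW v (by simp [Walk.support_cons])
    refine Reachable.trans ?_ (ih (fun u hu => hW u (by simp [Walk.support_cons, hu])) hnext hb)
    exact SimpleGraph.Adj.reachable (by simpa using h)

lemma induce_connected_of_walks {B : Set V} {v0 : V} (hv0 : v0 ∈ B)
    (h : ∀ a ∈ B, ∃ W : G.Walk a v0, ∀ u ∈ W.support, u ∈ B) :
    (G.induce B).Connected := by
  rw [SimpleGraph.connected_iff]
  refine ⟨?_, ⟨⟨v0, hv0⟩⟩⟩
  rintro ⟨a, ha⟩ ⟨b, hb⟩
  obtain ⟨Wa, hWa⟩ := h a ha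
  obtain ⟨Wb, hWb⟩ := h b hb
  exact (reach_induce Wa hWa ha hv0).trans (reach_induce Wb hWb hb hv0).symm

lemma dist_split (hconn : G.Connected) {a b : V} (W : G.Walk a b)
    (hlen : W.length = G.dist a b) {u : V} (hu : u ∈ W.support) :
    G.dist a u + G.dist u b = G.dist a b := by
  classical
  have h1 : G.dist a u ≤ (W.takeUntil u hu).length := SimpleGraph.dist_le _
  have h2 : G.dist u b ≤ (W.dropUntil u hu).length := SimpleGraph.dist_le _
  have h3 : (W.takeUntil u hu).length + (W.dropUntil u hu).length = W.length := by
    rw [← SimpleGraph.Walk.length_append, SimpleGraph.Walk.take_spec]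
  have h4 := hconn.dist_triangle (u := a) (v := u) (w := b)
  omega

/-- if every walk from `a` to `b` passes through `z`, distances add up. -/
lemma dist_add_of_not_reachOff (hconn : G.Connected) {a b z : V}
    (h : ¬ ReachOff G {z} a b) : G.dist a b = G.dist a z + G.dist z b := by
  obtain ⟨W, _, hWlen⟩ := hconn.exists_path_of_dist a b
  have hz : z ∈ W.support := by
    by_contra hz
    exact h ⟨W, fun u hu hmem => hz (by rwa [Set.mem_singleton_iff.mp hmem] at hu)⟩
  have := dist_split hconn W hWlen hz
  omega

/-- neighbor of `a` in the direction of `v`. -/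
lemma nbr_toward (hconn : G.Connected) {a v : V} (hne : a ≠ v) :
    ∃ t : V, G.Adj a t ∧ G.dist t v + 1 = G.dist a v := by
  have hpos : 0 < G.dist a v := hconn.pos_dist_of_ne hne
  obtain ⟨W, _, hWlen⟩ := hconn.exists_path_of_dist a v
  cases W with
  | nil => simp at hWlen; rw [SimpleGraph.dist_self] at hpos; omega
  | @cons _ t _ h p =>
    refine ⟨t, h, ?_⟩
    have h1 : G.dist t v ≤ p.length := SimpleGraph.dist_le _
    have h2 : G.dist a v ≤ G.dist a t + G.dist t v := hconn.dist_triangle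
    have h3 : G.dist a t ≤ 1 := by
      have := SimpleGraph.dist_le (SimpleGraph.Walk.cons h SimpleGraph.Walk.nil)
      simpa using this
    simp [SimpleGraph.Walk.length_cons] at hWlen
    omega

lemma block_adj (hbg : IsBlockGraph G) {w p q : V} (hwp : G.Adj w p) (hwq : G.Adj w q)
    (hpq : p ≠ q) (W : G.Walk p q) (hWs : w ∉ W.support) : G.Adj p q := by
  classical
  set P := W.bypass with hPdef
  have hPpath : P.IsPath := W.bypass_isPath
  have hwP : w ∉ P.support := fun h => hWs (W.support_bypass_subset h)
  set B : Set V := {w} ∪ {v | v ∈ P.support} with hBdef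
  have hpB : p ∈ B := Or.inr P.start_mem_support
  have hqB : q ∈ B := Or.inr P.end_mem_support
  have hwB : w ∈ B := Or.inl rfl
  have hwp' : w ≠ p := fun h => G.irrefl (h ▸ hwp)
  have hwq' : w ≠ q := fun h => G.irrefl (h ▸ hwq)
  -- cardinality
  have hsub : ({w, p, q} : Set V) ⊆ B := by
    intro v hv
    rcases hv with rfl | rfl | rfl
    · exact hwB
    · exact hpB
    · exact hqB
  have hfin : B.Finite := Set.finite_union.mpr ⟨Set.finite_singleton w, P.support.finite_toSet⟩
  have hcard : 3 ≤ B.ncard := by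
    have h3 : ({w, p, q} : Set V).ncard = 3 := by
      rw [Set.ncard_insert_of_notMem (by simp [hwp', hwq']) (Set.toFinite _),
        Set.ncard_pair hpq]
    calc 3 = ({w, p, q} : Set V).ncard := h3.symm
    _ ≤ B.ncard := Set.ncard_le_ncard hsub hfin
  -- connectivity of B
  have hconnB : (G.induce B).Connected := by
    refine induce_connected_of_walks hpB (fun a ha => ?_)
    rcases ha with rfl | haP
    · exact ⟨SimpleGraph.Walk.cons hwp SimpleGraph.Walk.nil, by
        intro u hu; simp [SimpleGraph.Walk.support_cons] at hu
        rcases hu with rfl | rfl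
        · exact hwB
        · exact hpB⟩
    · refine ⟨(P.takeUntil a haP).reverse, fun u hu => ?_⟩
      rw [SimpleGraph.Walk.support_reverse, List.mem_reverse] at hu
      exact Or.inr (P.support_takeUntil_subset haP hu)
  -- connectivity after deleting any vertex
  have hdel : ∀ u ∈ B, (G.induce (B \ {u})).Connected := by
    intro u hu
    by_cases huw : u = w
    · subst huw
      have hpB' : p ∈ B \ {u} := ⟨hpB, by simpa using hwp'.symm⟩
      refine induce_connected_of_walks hpB' (fun a ha => ?_)
      obtain ⟨haB, hau⟩ := ha
      rcases haB with rfl | haP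
      · exact absurd rfl hau
      · refine ⟨(P.takeUntil a haP).reverse, fun v hv => ?_⟩
        rw [SimpleGraph.Walk.support_reverse, List.mem_reverse] at hv
        have hvP := P.support_takeUntil_subset haP hv
        exact ⟨Or.inr hvP, fun h => hwP ((Set.mem_singleton_iff.mp h) ▸ hvP)⟩
    · have hwB' : w ∈ B \ {u} := ⟨hwB, by simpa using fun h => huw h.symm⟩
      refine induce_connected_of_walks hwB' (fun a ha => ?_)
      obtain ⟨haB, hau⟩ := ha
      have hau' : a ≠ u := by simpa using hau
      rcases haB with rfl | haP
      · exact ⟨SimpleGraph.Walk.nil, by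
          intro v hv; simp at hv; subst hv; exact hwB'⟩
      · by_cases huQ : u ∈ (P.takeUntil a haP).support
        · -- go forward to q then to w
          set R := P.dropUntil a haP with hRdef
          have huR : u ∉ R.support := by
            have hnd : (P.support).Nodup := hPpath.support_nodup
            rw [← P.take_spec haP, SimpleGraph.Walk.support_append] at hnd
            have hdisj := List.disjoint_of_nodup_append hnd
            intro huRs
            have : u ∈ R.support.tail := by
              have := SimpleGraph.Walk.support_eq_cons R
              rw [this] at huRs
              rcases List.mem_cons.mp huRs with h | h
              · exact absurd h.symm hau'
              · exact h
            exact hdisj huQ this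
          refine ⟨R.concat hwq.symm, fun v hv => ?_⟩
          rw [SimpleGraph.Walk.support_concat, List.mem_append] at hv
          rcases hv with hvR | hvw
          · exact ⟨Or.inr (P.support_dropUntil_subset haP hvR),
              fun h => huR ((Set.mem_singleton_iff.mp h) ▸ hvR)⟩
          · simp at hvw
            subst hvw
            exact hwB'
        · set Q := P.takeUntil a haP with hQdef
          refine ⟨Q.reverse.concat hwp.symm, fun v hv => ?_⟩
          rw [SimpleGraph.Walk.support_concat, List.mem_append] at hv
          rcases hv with hvQ | hvw
          · rw [SimpleGraph.Walk.support_reverse, List.mem_reverse] at hvQ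
            exact ⟨Or.inr (P.support_takeUntil_subset haP hvQ),
              fun h => huQ ((Set.mem_singleton_iff.mp h) ▸ hvQ)⟩
          · simp at hvw
            subst hvw
            exact hwB'
  have hclique := hbg.2 B hcard hconnB hdel
  exact hclique hpB hqB hpq

/-- `S`-membership helpers for the separation argument. -/
lemma not_reachOff (hbg : IsBlockGraph G) {x w t : V} (hwx : w ≠ x) (hwt : G.Adj w t)
    (ht : G.dist x t = G.dist x w + 1) : ¬ ReachOff G {w} t x := by
  have hconn := hbg.1
  rintro ⟨W, hW⟩
  have hwW : w ∉ W.support := fun h => hW w h rfl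
  obtain ⟨q, hq, hqd⟩ := nbr_toward hconn hwx
  have hqd' : G.dist x q + 1 = G.dist x w := by
    rwa [SimpleGraph.dist_comm (u := q), SimpleGraph.dist_comm (u := w)] at hqd
  obtain ⟨P, _, hPlen⟩ := hconn.exists_path_of_dist x q
  have hwP : w ∉ P.support := by
    intro h
    have hsplit := dist_split hconn P hPlen h
    omega
  have htq : t ≠ q := by intro h; subst h; omega
  have hadj : G.Adj t q := by
    refine block_adj hbg hwt hq htq (W.append P) ?_
    intro h
    rcases (SimpleGraph.Walk.mem_support_append_iff _ _).mp h with h1 | h1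
    · exact hwW h1
    · exact hwP h1
  have h1 : G.dist x t ≤ G.dist x q + G.dist q t := hconn.dist_triangle
  have h2 : G.dist q t = 1 := SimpleGraph.dist_eq_one_iff_adj.mpr hadj.symm
  omega

lemma memPm_of_good (hbg : IsBlockGraph G) {x y w t : V} (hxy : x ≠ y)
    (hw : G.dist x w = G.dist y w) (hwt : G.Adj w t)
    (htx : G.dist x t = G.dist x w + 1) (hty : G.dist y t = G.dist y w + 1) :
    memPm G x y (G.dist x w) := by
  have hconn := hbg.1
  have hwx : w ≠ x := by
    rintro rfl
    rw [SimpleGraph.dist_self] at hw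
    exact hxy ((hconn.dist_eq_zero_iff).mp hw.symm).symm
  have hwy : w ≠ y := by
    rintro rfl
    rw [SimpleGraph.dist_self] at hw
    exact hxy ((hconn.dist_eq_zero_iff).mp hw)
  have htw : t ∉ ({w} : Set V) := by
    intro h
    rw [Set.mem_singleton_iff.mp h] at htx
    omega
  have hnrx : ¬ ReachOff G {w} t x := not_reachOff hbg hwx hwt htx
  have hnry : ¬ ReachOff G {w} t y := not_reachOff hbg hwy hwt hty
  refine ⟨hxy, {w}, ?_, ⟨t, x, htw, by simpa using hwx.symm, hnrx⟩, ⟨t, htw, hnrx, hnry⟩⟩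
  intro s hs
  rw [Set.mem_singleton_iff.mp hs]
  exact ⟨rfl, hw.symm⟩

section NoGood

variable {x y : V}

/-- distance split in both coordinates. -/
lemma l_split (hconn : G.Connected) {c z v : V} (h : ¬ ReachOff G {z} v c) :
    G.dist c v = G.dist c z + G.dist z v := by
  have h1 := dist_add_of_not_reachOff hconn h
  have e1 := SimpleGraph.dist_comm (G := G) (u := v) (v := c)
  have e2 := SimpleGraph.dist_comm (G := G) (u := v) (v := z)
  have e3 := SimpleGraph.dist_comm (G := G) (u := z) (v := c)
  omega

lemma l_equi_ne (hconn : G.Connected) (hxy : x ≠ y) {z : V}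
    (hz : G.dist x z = G.dist y z) : z ≠ x ∧ z ≠ y := by
  constructor
  · rintro rfl
    rw [SimpleGraph.dist_self] at hz
    exact hxy ((hconn.dist_eq_zero_iff).mp hz.symm).symm
  · rintro rfl
    rw [SimpleGraph.dist_self] at hz
    exact hxy ((hconn.dist_eq_zero_iff).mp hz)

lemma l_B2 (hconn : G.Connected)
    (hng : ∀ w t : V, G.dist x w = G.dist y w → G.Adj w t →
      ¬(G.dist x t = G.dist x w + 1 ∧ G.dist y t = G.dist y w + 1))
    {z v : V} (hz : G.dist x z = G.dist y z) (hvz : v ≠ z) :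
    ¬(G.dist x v = G.dist x z + G.dist z v ∧ G.dist y v = G.dist y z + G.dist z v) := by
  rintro ⟨h1, h2⟩
  obtain ⟨t, hzt, htd⟩ := nbr_toward hconn (Ne.symm hvz)
  have e1 : G.dist x v ≤ G.dist x t + G.dist t v := hconn.dist_triangle
  have e2 : G.dist x t ≤ G.dist x z + G.dist z t := hconn.dist_triangle
  have e3 : G.dist z t = 1 := SimpleGraph.dist_eq_one_iff_adj.mpr hzt
  have e4 : G.dist y v ≤ G.dist y t + G.dist t v := hconn.dist_triangle
  have e5 : G.dist y t ≤ G.dist y z + G.dist z t := hconn.dist_triangle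
  exact hng z t hz hzt ⟨by omega, by omega⟩

lemma l_ZZ (hconn : G.Connected)
    (hng : ∀ w t : V, G.dist x w = G.dist y w → G.Adj w t →
      ¬(G.dist x t = G.dist x w + 1 ∧ G.dist y t = G.dist y w + 1))
    {z z' : V} (hz : G.dist x z = G.dist y z) (hz' : G.dist x z' = G.dist y z')
    (hne : z' ≠ z) : ReachOff G {z} z' x ∧ ReachOff G {z} z' y := by
  constructor
  · by_contra h
    have e := l_split hconn h
    exact l_B2 hconn hng hz hne ⟨e, by omega⟩
  · by_contra h
    have e := l_split hconn h
    exact l_B2 hconn hng hz hne ⟨by omega, e⟩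

lemma l_xy (hconn : G.Connected)
    (hng : ∀ w t : V, G.dist x w = G.dist y w → G.Adj w t →
      ¬(G.dist x t = G.dist x w + 1 ∧ G.dist y t = G.dist y w + 1))
    {z : V} (hz : G.dist x z = G.dist y z)
    (hother : ∃ z', (G.dist x z' = G.dist y z') ∧ z' ≠ z) :
    ReachOff G {z} x y := by
  obtain ⟨z', hz', hne⟩ := hother
  obtain ⟨Rx, Ry⟩ := l_ZZ hconn hng hz hz' hne
  exact Rx.symm.trans Ry

lemma l_nreach (hconn : G.Connected)
    (hng : ∀ w t : V, G.dist x w = G.dist y w → G.Adj w t →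
      ¬(G.dist x t = G.dist x w + 1 ∧ G.dist y t = G.dist y w + 1))
    {z t : V} (hz : G.dist x z = G.dist y z) (hzt : G.Adj z t) :
    ReachOff G {z} t x ∨ ReachOff G {z} t y := by
  by_contra h
  push_neg at h
  obtain ⟨h1, h2⟩ := h
  have e1 := l_split hconn h1
  have e2 := l_split hconn h2
  have e3 : G.dist z t = 1 := SimpleGraph.dist_eq_one_iff_adj.mpr hzt
  exact hng z t hz hzt ⟨by omega, by omega⟩

lemma l_nadj (hbg : IsBlockGraph G)
    (hng : ∀ w t : V, G.dist x w = G.dist y w → G.Adj w t →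
      ¬(G.dist x t = G.dist x w + 1 ∧ G.dist y t = G.dist y w + 1))
    {z : V} (hz : G.dist x z = G.dist y z)
    (hother : ∃ z', (G.dist x z' = G.dist y z') ∧ z' ≠ z)
    {t s : V} (hzt : G.Adj z t) (hzs : G.Adj z s) (hts : t ≠ s) : G.Adj t s := by
  have hconn := hbg.1
  have hxyR := l_xy hconn hng hz hother
  have hR : ReachOff G {z} t s := by
    rcases l_nreach hconn hng hz hzt with ht | ht <;>
      rcases l_nreach hconn hng hz hzs with hs | hs
    · exact ht.trans hs.symm
    · exact ht.trans (hxyR.trans hs.symm)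
    · exact ht.trans (hxyR.symm.trans hs.symm)
    · exact ht.trans hs.symm
  obtain ⟨W, hW⟩ := hR
  exact block_adj hbg hzt hzs hts W (fun h => hW z h rfl)

lemma l_uxuy (hbg : IsBlockGraph G) (hxy : x ≠ y)
    (hng : ∀ w t : V, G.dist x w = G.dist y w → G.Adj w t →
      ¬(G.dist x t = G.dist x w + 1 ∧ G.dist y t = G.dist y w + 1))
    {z : V} (hz : G.dist x z = G.dist y z)
    (hother : ∃ z', (G.dist x z' = G.dist y z') ∧ z' ≠ z) :
    ∃ ux uy : V, G.Adj z ux ∧ G.Adj z uy ∧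
      G.dist x ux + 1 = G.dist x z ∧ G.dist y ux = G.dist y z ∧
      G.dist x uy = G.dist x z ∧ G.dist y uy + 1 = G.dist y z := by
  have hconn := hbg.1
  obtain ⟨hzx, hzy⟩ := l_equi_ne hconn hxy hz
  obtain ⟨ux, hzux, hux⟩ := nbr_toward hconn hzx
  obtain ⟨uy, hzuy, huy⟩ := nbr_toward hconn hzy
  have hux' : G.dist x ux + 1 = G.dist x z := by
    have := SimpleGraph.dist_comm (G := G) (u := ux) (v := x)
    have := SimpleGraph.dist_comm (G := G) (u := z) (v := x)
    omega
  have huy' : G.dist y uy + 1 = G.dist y z := by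
    have := SimpleGraph.dist_comm (G := G) (u := uy) (v := y)
    have := SimpleGraph.dist_comm (G := G) (u := z) (v := y)
    omega
  have hzux1 : G.dist z ux = 1 := SimpleGraph.dist_eq_one_iff_adj.mpr hzux
  have hzuy1 : G.dist z uy = 1 := SimpleGraph.dist_eq_one_iff_adj.mpr hzuy
  have hne' : ux ≠ uy := by
    rintro rfl
    have hequi : G.dist x ux = G.dist y ux := by omega
    exact hng ux z hequi hzux.symm ⟨by omega, by omega⟩
  have hadjuu : G.Adj ux uy := l_nadj hbg hng hz hother hzux hzuy hne'
  have huu1 : G.dist y ux ≤ G.dist y uy + G.dist uy ux := hconn.dist_triangle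
  have huu1' : G.dist uy ux = 1 := SimpleGraph.dist_eq_one_iff_adj.mpr hadjuu.symm
  have huu2 : G.dist y z ≤ G.dist y ux + G.dist ux z := hconn.dist_triangle
  have huu2' : G.dist ux z = 1 := SimpleGraph.dist_eq_one_iff_adj.mpr hzux.symm
  have hyux : G.dist y ux = G.dist y z := by
    rcases (by omega : G.dist y ux + 1 = G.dist y z ∨ G.dist y ux = G.dist y z) with h | h
    · exact absurd ⟨by omega, by omega⟩ (hng ux z (by omega) hzux.symm)
    · exact h
  have huu3 : G.dist x uy ≤ G.dist x ux + G.dist ux uy := hconn.dist_triangle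
  have huu3' : G.dist ux uy = 1 := SimpleGraph.dist_eq_one_iff_adj.mpr hadjuu
  have huu4 : G.dist x z ≤ G.dist x uy + G.dist uy z := hconn.dist_triangle
  have huu4' : G.dist uy z = 1 := SimpleGraph.dist_eq_one_iff_adj.mpr hzuy.symm
  have hxuy : G.dist x uy = G.dist x z := by
    rcases (by omega : G.dist x uy + 1 = G.dist x z ∨ G.dist x uy = G.dist x z) with h | h
    · exact absurd ⟨by omega, by omega⟩ (hng uy z (by omega) hzuy.symm)
    · exact h
  exact ⟨ux, uy, hzux, hzuy, hux', hyux, hxuy, huy'⟩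


end NoGood

section NoGood2

variable {x y : V}

lemma l_types (hbg : IsBlockGraph G) (hxy : x ≠ y)
    (hng : ∀ w t : V, G.dist x w = G.dist y w → G.Adj w t →
      ¬(G.dist x t = G.dist x w + 1 ∧ G.dist y t = G.dist y w + 1))
    {z : V} (hz : G.dist x z = G.dist y z)
    (hother : ∃ z', (G.dist x z' = G.dist y z') ∧ z' ≠ z)
    {t : V} (hzt : G.Adj z t) :
    (G.dist x t + 1 = G.dist x z ∧ G.dist y t = G.dist y z) ∨
    (G.dist x t = G.dist x z ∧ G.dist y t + 1 = G.dist y z) ∨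
    (G.dist x t = G.dist x z ∧ G.dist y t = G.dist y z) := by
  have hconn := hbg.1
  obtain ⟨ux, uy, hzux, hzuy, hux1, hux2, huy1, huy2⟩ := l_uxuy hbg hxy hng hz hother
  have b1 : G.dist x t ≤ G.dist x z := by
    by_cases h : t = ux
    · subst h; omega
    · have hadj : G.Adj t ux := l_nadj hbg hng hz hother hzt hzux h
      have t1 : G.dist x t ≤ G.dist x ux + G.dist ux t := hconn.dist_triangle
      have t2 : G.dist ux t = 1 := SimpleGraph.dist_eq_one_iff_adj.mpr hadj.symm
      omega
  have b2 : G.dist y t ≤ G.dist y z := by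
    by_cases h : t = uy
    · subst h; omega
    · have hadj : G.Adj t uy := l_nadj hbg hng hz hother hzt hzuy h
      have t1 : G.dist y t ≤ G.dist y uy + G.dist uy t := hconn.dist_triangle
      have t2 : G.dist uy t = 1 := SimpleGraph.dist_eq_one_iff_adj.mpr hadj.symm
      omega
  have t3 : G.dist z t = 1 := SimpleGraph.dist_eq_one_iff_adj.mpr hzt
  have lb1 : G.dist x z ≤ G.dist x t + G.dist t z := hconn.dist_triangle
  have lb2 : G.dist y z ≤ G.dist y t + G.dist t z := hconn.dist_triangle
  have t4 := SimpleGraph.dist_comm (G := G) (u := t) (v := z)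
  have nb : ¬(G.dist x t + 1 = G.dist x z ∧ G.dist y t + 1 = G.dist y z) := by
    rintro ⟨e1, e2⟩
    exact hng t z (by omega) hzt.symm ⟨by omega, by omega⟩
  by_cases c1 : G.dist x t + 1 = G.dist x z <;> by_cases c2 : G.dist y t + 1 = G.dist y z
  · exact absurd ⟨c1, c2⟩ nb
  · exact Or.inl ⟨c1, by omega⟩
  · exact Or.inr (Or.inl ⟨by omega, c2⟩)
  · exact Or.inr (Or.inr ⟨by omega, by omega⟩)

lemma l_adjZ (hbg : IsBlockGraph G) (hxy : x ≠ y)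
    (hng : ∀ w t : V, G.dist x w = G.dist y w → G.Adj w t →
      ¬(G.dist x t = G.dist x w + 1 ∧ G.dist y t = G.dist y w + 1))
    (hother : ∀ z : V, G.dist x z = G.dist y z →
      ∃ z', (G.dist x z' = G.dist y z') ∧ z' ≠ z) :
    ∀ g : ℕ, ∀ z z' : V, G.dist x z = G.dist y z → G.dist x z' = G.dist y z' →
      G.dist z z' = g → z = z' ∨ G.Adj z z' := by
  have hconn := hbg.1
  intro g
  induction g using Nat.strong_induction_on with
  | _ g IH =>
  intro z z' hz hz' hg
  by_cases hg0 : g = 0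
  · left; exact hconn.dist_eq_zero_iff.mp (by omega)
  by_cases hg1 : g = 1
  · right; exact SimpleGraph.dist_eq_one_iff_adj.mp (by omega)
  have hg2 : 2 ≤ g := by omega
  have hne : z ≠ z' := by
    rintro rfl
    rw [SimpleGraph.dist_self] at hg
    omega
  obtain ⟨W, hWp, hWlen⟩ := hconn.exists_path_of_dist z z'
  cases W with
  | nil => exact Or.inl rfl
  | @cons _ t1 _ ha rest =>
    right
    rw [SimpleGraph.Walk.length_cons, hg] at hWlen
    have hd1 : G.dist t1 z' + 1 = g := by
      have u1 : G.dist t1 z' ≤ rest.length := SimpleGraph.dist_le rest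
      have u2 : G.dist z z' ≤ G.dist z t1 + G.dist t1 z' := hconn.dist_triangle
      have u3 : G.dist z t1 = 1 := SimpleGraph.dist_eq_one_iff_adj.mpr ha
      omega
    rcases l_types hbg hxy hng hz (hother z hz) ha with hX | hY | hZ
    -- x-type: contradiction
    · exfalso
      obtain ⟨hX1, hX2⟩ := hX
      cases rest with
      | nil =>
        rw [SimpleGraph.dist_self] at hd1
        omega
      | @cons _ r _ hb rest2 =>
        rw [SimpleGraph.Walk.length_cons] at hWlen
        have hdr : G.dist r z' + 2 = g := by
          have u1 : G.dist r z' ≤ rest2.length := SimpleGraph.dist_le rest2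
          have u2 : G.dist t1 z' ≤ G.dist t1 r + G.dist r z' := hconn.dist_triangle
          have u3 : G.dist t1 r = 1 := SimpleGraph.dist_eq_one_iff_adj.mpr hb
          omega
        have hdzr2 : G.dist z r ≤ 2 := by
          have := SimpleGraph.dist_le
            (SimpleGraph.Walk.cons ha (SimpleGraph.Walk.cons hb SimpleGraph.Walk.nil))
          simpa using this
        have hdzr : G.dist z r = 2 := by
          have u2 : G.dist z z' ≤ G.dist z r + G.dist r z' := hconn.dist_triangle
          omega
        obtain ⟨ux, uy, hzux, hzuy, hux1, hux2, huy1, huy2⟩ :=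
          l_uxuy hbg hxy hng hz (hother z hz)
        have hm2 : G.dist x z' ≤ G.dist x t1 + G.dist t1 z' := hconn.dist_triangle
        obtain ⟨Qy, _, hQylen⟩ := hconn.exists_path_of_dist z' y
        have ht1Qy : t1 ∉ Qy.support := by
          intro hmem
          have hsp := dist_split hconn Qy hQylen hmem
          have c1 := SimpleGraph.dist_comm (G := G) (u := z') (v := t1)
          have c2 := SimpleGraph.dist_comm (G := G) (u := t1) (v := y)
          have c3 := SimpleGraph.dist_comm (G := G) (u := z') (v := y)
          omega
        obtain ⟨Py, _, hPylen⟩ := hconn.exists_path_of_dist uy y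
        have ht1Py : t1 ∉ Py.support := by
          intro hmem
          have hsp := dist_split hconn Py hPylen hmem
          have c2 := SimpleGraph.dist_comm (G := G) (u := t1) (v := y)
          have c3 := SimpleGraph.dist_comm (G := G) (u := uy) (v := y)
          omega
        have hnd := hWp.support_nodup
        rw [SimpleGraph.Walk.support_cons, SimpleGraph.Walk.support_cons] at hnd
        have ht1r2 : t1 ∉ rest2.support := by
          have h1 := List.nodup_cons.mp hnd
          exact (List.nodup_cons.mp h1.2).1
        have hsupp : t1 ∉ (SimpleGraph.Walk.cons hzuy
            (Py.append (Qy.reverse.append rest2.reverse))).support := by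
          rw [SimpleGraph.Walk.support_cons]
          intro hmem
          rcases List.mem_cons.mp hmem with h | h
          · exact ha.ne h.symm
          · rcases (SimpleGraph.Walk.mem_support_append_iff _ _).mp h with h | h
            · exact ht1Py h
            · rcases (SimpleGraph.Walk.mem_support_append_iff _ _).mp h with h | h
              · rw [SimpleGraph.Walk.support_reverse, List.mem_reverse] at h
                exact ht1Qy h
              · rw [SimpleGraph.Walk.support_reverse, List.mem_reverse] at h
                exact ht1r2 h
        have hzr : z ≠ r := by
          intro h
          rw [h, SimpleGraph.dist_self] at hdzr
          omega
        have hadjzr : G.Adj z r := block_adj hbg ha.symm hb hzr _ hsupp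
        have : G.dist z r = 1 := SimpleGraph.dist_eq_one_iff_adj.mpr hadjzr
        omega
    -- y-type: contradiction (mirror)
    · exfalso
      obtain ⟨hY1, hY2⟩ := hY
      cases rest with
      | nil =>
        rw [SimpleGraph.dist_self] at hd1
        omega
      | @cons _ r _ hb rest2 =>
        rw [SimpleGraph.Walk.length_cons] at hWlen
        have hdr : G.dist r z' + 2 = g := by
          have u1 : G.dist r z' ≤ rest2.length := SimpleGraph.dist_le rest2
          have u2 : G.dist t1 z' ≤ G.dist t1 r + G.dist r z' := hconn.dist_triangle
          have u3 : G.dist t1 r = 1 := SimpleGraph.dist_eq_one_iff_adj.mpr hb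
          omega
        have hdzr2 : G.dist z r ≤ 2 := by
          have := SimpleGraph.dist_le
            (SimpleGraph.Walk.cons ha (SimpleGraph.Walk.cons hb SimpleGraph.Walk.nil))
          simpa using this
        have hdzr : G.dist z r = 2 := by
          have u2 : G.dist z z' ≤ G.dist z r + G.dist r z' := hconn.dist_triangle
          omega
        obtain ⟨ux, uy, hzux, hzuy, hux1, hux2, huy1, huy2⟩ :=
          l_uxuy hbg hxy hng hz (hother z hz)
        have hm2 : G.dist y z' ≤ G.dist y t1 + G.dist t1 z' := hconn.dist_triangle
        obtain ⟨Qx, _, hQxlen⟩ := hconn.exists_path_of_dist z' x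
        have ht1Qx : t1 ∉ Qx.support := by
          intro hmem
          have hsp := dist_split hconn Qx hQxlen hmem
          have c1 := SimpleGraph.dist_comm (G := G) (u := z') (v := t1)
          have c2 := SimpleGraph.dist_comm (G := G) (u := t1) (v := x)
          have c3 := SimpleGraph.dist_comm (G := G) (u := z') (v := x)
          omega
        obtain ⟨Px, _, hPxlen⟩ := hconn.exists_path_of_dist ux x
        have ht1Px : t1 ∉ Px.support := by
          intro hmem
          have hsp := dist_split hconn Px hPxlen hmem
          have c2 := SimpleGraph.dist_comm (G := G) (u := t1) (v := x)
          have c3 := SimpleGraph.dist_comm (G := G) (u := ux) (v := x)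
          omega
        have hnd := hWp.support_nodup
        rw [SimpleGraph.Walk.support_cons, SimpleGraph.Walk.support_cons] at hnd
        have ht1r2 : t1 ∉ rest2.support := by
          have h1 := List.nodup_cons.mp hnd
          exact (List.nodup_cons.mp h1.2).1
        have hsupp : t1 ∉ (SimpleGraph.Walk.cons hzux
            (Px.append (Qx.reverse.append rest2.reverse))).support := by
          rw [SimpleGraph.Walk.support_cons]
          intro hmem
          rcases List.mem_cons.mp hmem with h | h
          · exact ha.ne h.symm
          · rcases (SimpleGraph.Walk.mem_support_append_iff _ _).mp h with h | h
            · exact ht1Px h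
            · rcases (SimpleGraph.Walk.mem_support_append_iff _ _).mp h with h | h
              · rw [SimpleGraph.Walk.support_reverse, List.mem_reverse] at h
                exact ht1Qx h
              · rw [SimpleGraph.Walk.support_reverse, List.mem_reverse] at h
                exact ht1r2 h
        have hzr : z ≠ r := by
          intro h
          rw [h, SimpleGraph.dist_self] at hdzr
          omega
        have hadjzr : G.Adj z r := block_adj hbg ha.symm hb hzr _ hsupp
        have : G.dist z r = 1 := SimpleGraph.dist_eq_one_iff_adj.mpr hadjzr
        omega
    -- t1 equidistant
    · obtain ⟨hZ1, hZ2⟩ := hZ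
      have ht1 : G.dist x t1 = G.dist y t1 := by omega
      have ht1z' : t1 ≠ z' := by
        rintro rfl
        rw [SimpleGraph.dist_self] at hd1
        omega
      rcases IH (g - 1) (by omega) t1 z' ht1 hz' (by omega) with h | h
      · exact absurd h ht1z'
      · exact l_nadj hbg hng ht1 (hother t1 ht1) ha.symm h hne

end NoGood2

lemma tagged_of_nogood [Fintype V] (hbg : IsBlockGraph G) {x y z1 z2 : V} (hxy : x ≠ y)
    (hz1 : G.dist x z1 = G.dist y z1) (hz2 : G.dist x z2 = G.dist y z2) (h12 : z1 ≠ z2)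
    (hng : ∀ w t : V, G.dist x w = G.dist y w → G.Adj w t →
      ¬(G.dist x t = G.dist x w + 1 ∧ G.dist y t = G.dist y w + 1)) :
    Tagged G := by
  have hconn := hbg.1
  have hother : ∀ z : V, G.dist x z = G.dist y z →
      ∃ z', (G.dist x z' = G.dist y z') ∧ z' ≠ z := by
    intro z _
    by_cases h : z = z1
    · exact ⟨z2, hz2, by rw [h]; exact fun hh => h12 hh.symm⟩
    · exact ⟨z1, hz1, fun hh => h hh.symm⟩
  have hadj12 : G.Adj z1 z2 :=
    (l_adjZ hbg hxy hng hother _ z1 z2 hz1 hz2 rfl).resolve_left h12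
  set K : Set V := insert z1 (G.neighborSet z1) with hK
  have hmemK : ∀ v, v ∈ K ↔ (v = z1 ∨ G.Adj z1 v) := by
    intro v; simp [hK, SimpleGraph.mem_neighborSet]
  have hclq : G.IsClique K := by
    rw [SimpleGraph.isClique_iff]
    intro a ha b hb hab
    rcases (hmemK a).mp ha with rfl | ha' <;> rcases (hmemK b).mp hb with rfl | hb'
    · exact absurd rfl hab
    · exact hb'
    · exact ha'.symm
    · exact l_nadj hbg hng hz1 (hother z1 hz1) ha' hb' hab
  have hz1K : z1 ∈ K := (hmemK z1).mpr (Or.inl rfl)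
  have hz2K : z2 ∈ K := (hmemK z2).mpr (Or.inr hadj12)
  have hmax : ∀ K' : Set V, K ⊆ K' → G.IsClique K' → K' = K := by
    intro K' hsub hK'
    apply Set.Subset.antisymm
    · intro v hv
      by_cases h : v = z1
      · exact (hmemK v).mpr (Or.inl h)
      · exact (hmemK v).mpr (Or.inr (hK' (hsub hz1K) hv (fun hh => h hh.symm)))
    · exact hsub
  obtain ⟨ux, uy, hzux, hzuy, hux1, hux2, huy1, huy2⟩ :=
    l_uxuy hbg hxy hng hz1 (hother z1 hz1)
  have hxneuy : ux ≠ uy := by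
    intro h
    rw [h] at hux1
    omega
  have hsub2 : ({ux, uy} : Set V) ⊆ G.neighborSet z1 := by
    intro v hv
    simp only [Set.mem_insert_iff, Set.mem_singleton_iff] at hv
    rcases hv with rfl | rfl
    · exact hzux
    · exact hzuy
  have hn2 : 2 ≤ (G.neighborSet z1).ncard := by
    calc 2 = ({ux, uy} : Set V).ncard := (Set.ncard_pair hxneuy).symm
    _ ≤ _ := Set.ncard_le_ncard hsub2 (Set.toFinite _)
  have hz1nmem : z1 ∉ G.neighborSet z1 := by simp
  have hKcard : K.ncard = (G.neighborSet z1).ncard + 1 :=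
    Set.ncard_insert_of_notMem hz1nmem (Set.toFinite _)
  have h3K : 3 ≤ K.ncard := by omega
  have hdeg1 : (G.neighborSet z1).ncard = K.ncard - 1 := by omega
  have hNz2 : G.neighborSet z2 = K \ {z2} := by
    ext t
    simp only [SimpleGraph.mem_neighborSet, Set.mem_diff, Set.mem_singleton_iff]
    constructor
    · intro ht
      refine ⟨?_, ht.ne'⟩
      by_cases h : t = z1
      · exact (hmemK t).mpr (Or.inl h)
      · exact (hmemK t).mpr
          (Or.inr ((l_nadj hbg hng hz2 (hother z2 hz2) ht hadj12.symm h).symm))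
    · rintro ⟨htK, htne⟩
      rcases (hmemK t).mp htK with rfl | h
      · exact hadj12.symm
      · exact (hclq htK hz2K htne).symm
  have hdeg2 : (G.neighborSet z2).ncard = K.ncard - 1 := by
    rw [hNz2, Set.ncard_diff_singleton_of_mem hz2K]
  exact ⟨K, hclq, hmax, h3K, z1, hz1K, z2, hz2K, h12, hdeg1, hdeg2⟩

end BlockGraphHelpers

theorem stmt17 {V : Type*} [Fintype V] (G : SimpleGraph V)
    (hG : IsBlockGraph G) (hne : NonElementary G) (hnt : ¬ Tagged G) :
    ∀ x y : V, x ≠ y →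
      (∃ m : ℕ, memPm G x y m) ∨
        Fintype.card V - 1 ≤ (distinguishers G x y).ncard := by
  intro x y hxy
  by_cases hgood : ∃ w t : V, G.dist x w = G.dist y w ∧ G.Adj w t ∧
      G.dist x t = G.dist x w + 1 ∧ G.dist y t = G.dist y w + 1
  · obtain ⟨w, t, hw, hwt, htx, hty⟩ := hgood
    exact Or.inl ⟨G.dist x w, memPm_of_good hG hxy hw hwt htx hty⟩
  by_cases hP : Fintype.card V - 1 ≤ (distinguishers G x y).ncard
  · exact Or.inr hP
  exfalso
  set Z : Set V := {w | G.dist x w = G.dist y w} with hZ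
  have hcompl : (distinguishers G x y)ᶜ = Z := by
    ext w
    simp [distinguishers, hZ]
  have hsum := Set.ncard_add_ncard_compl (distinguishers G x y) (Set.toFinite _) (Set.toFinite _)
  rw [Nat.card_eq_fintype_card, hcompl] at hsum
  have hnontriv : Nontrivial V := ⟨⟨x, y, hxy⟩⟩
  have hcard2 : 1 < Fintype.card V := Fintype.one_lt_card_iff_nontrivial.mpr hnontriv
  have hZ2 : 1 < Z.ncard := by omega
  obtain ⟨z1, z2, hz1m, hz2m, h12⟩ := (Set.one_lt_ncard_iff (Set.toFinite _)).mp hZ2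
  have hz1 : G.dist x z1 = G.dist y z1 := hz1m
  have hz2 : G.dist x z2 = G.dist y z2 := hz2m
  have hng : ∀ w t : V, G.dist x w = G.dist y w → G.Adj w t →
      ¬(G.dist x t = G.dist x w + 1 ∧ G.dist y t = G.dist y w + 1) :=
    fun w t ha hb hc => hgood ⟨w, t, ha, hb, hc.1, hc.2⟩
  exact hnt (tagged_of_nogood hG hxy hz1 hz2 h12 hng)
end
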